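/- Let u:ℝᴺ×[0,∞)→[0,∞) be bounded by M, with sup_{t>0} u(x,t) → 0 as |x| → ∞, and suppose (1/2)∫|∇u(·,t)|² - ∫F(u(·,t)) ≤ C₀ for all t ≥ t₀, where F(s) ≤ (f'(0)/4)s² for 0 ≤ s ≤ δ with f'(0) < 0, and u(x,t) ≤ δ for |x| ≥ R₀ and all t. Then sup_{t≥t₀} ‖u(·,t)‖_{H¹(ℝᴺ)} < ∞, with bound (1/2)∫|∇u|² + (|f'(0)|/4)∫u² ≤ C₀ + |B_{R₀}|(sup_{s∈[0,M]}F(s) + M²|f'(0)|/4). -/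

import Mathlib

open MeasureTheory Filter

/-- Uniform H¹ bound from the energy bound: if 0 ≤ u ≤ M, the energy
(1/2)∫|∇u|² - ∫F(u) is bounded by C₀ for t ≥ t₀, F(s) ≤ (c/4)s² for
0 ≤ s ≤ δ (with c = f'(0) < 0), and u(x,t) ≤ δ for |x| ≥ R₀, then
(1/2)∫|∇u|² + (|c|/4)∫u² ≤ C₀ + |B_{R₀}|(sup_{[0,M]}F + M²|c|/4). -/
theorem stmt_16 {N : ℕ} (u : EuclideanSpace ℝ (Fin N) → ℝ → ℝ) (F : ℝ → ℝ)
    (M δ R₀ C₀ c t₀ : ℝ) (hc : c < 0) (hM : 0 ≤ M) (hδ : 0 < δ) (hR : 0 < R₀)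
    (hbound : ∀ x t, 0 ≤ u x t ∧ u x t ≤ M)
    (hdiff : ∀ t, Differentiable ℝ (fun x => u x t))
    (henergy : ∀ t, t₀ ≤ t →
      (1/2) * (∫ x, ‖fderiv ℝ (fun y => u y t) x‖ ^ 2) - (∫ x, F (u x t)) ≤ C₀)
    (hF : ∀ s : ℝ, 0 ≤ s → s ≤ δ → F s ≤ (c/4) * s ^ 2)
    (hfar : ∀ t x, R₀ ≤ ‖x‖ → u x t ≤ δ)
    (hFcont : ContinuousOn F (Set.Icc 0 M))
    (hint1 : ∀ t, t₀ ≤ t → Integrable (fun x => (u x t) ^ 2))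
    (hint2 : ∀ t, t₀ ≤ t →
      Integrable (fun x => ‖fderiv ℝ (fun y => u y t) x‖ ^ 2))
    (hint3 : ∀ t, t₀ ≤ t → Integrable (fun x => F (u x t))) :
    ∀ t, t₀ ≤ t →
      (1/2) * (∫ x, ‖fderiv ℝ (fun y => u y t) x‖ ^ 2) +
          (|c|/4) * (∫ x, (u x t) ^ 2) ≤
        C₀ + (volume (Metric.ball (0 : EuclideanSpace ℝ (Fin N)) R₀)).toReal *
          (sSup (F '' Set.Icc 0 M) + M ^ 2 * |c| / 4) := by
  intro t ht
  set B := Metric.ball (0 : EuclideanSpace ℝ (Fin N)) R₀ with hB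
  set K : ℝ := sSup (F '' Set.Icc 0 M) + M ^ 2 * |c| / 4 with hKdef
  have hbdd : BddAbove (F '' Set.Icc 0 M) :=
    (isCompact_Icc.image_of_continuousOn hFcont).bddAbove
  -- pointwise bound: F(u) + (|c|/4) u² ≤ K · 1_B
  have hptwise : ∀ x, F (u x t) + (|c|/4) * (u x t) ^ 2 ≤
      Set.indicator B (fun _ => K) x := by
    intro x
    by_cases hx : x ∈ B
    · rw [Set.indicator_of_mem hx]
      have hu := hbound x t
      have h1 : F (u x t) ≤ sSup (F '' Set.Icc 0 M) :=
        le_csSup hbdd ⟨u x t, ⟨hu.1, hu.2⟩, rfl⟩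
      have h2 : (u x t) ^ 2 ≤ M ^ 2 := by nlinarith [hu.1, hu.2]
      have h3 : (0:ℝ) ≤ |c| := abs_nonneg c
      nlinarith
    · rw [Set.indicator_of_notMem hx]
      have hxnorm : R₀ ≤ ‖x‖ := by
        simp only [hB, Metric.mem_ball, dist_zero_right, not_lt] at hx
        exact hx
      have hu := hbound x t
      have h1 : F (u x t) ≤ (c/4) * (u x t) ^ 2 :=
        hF _ hu.1 (hfar t x hxnorm)
      have habs : |c| = -c := abs_of_neg hc
      nlinarith [sq_nonneg (u x t)]
  have hgint : Integrable (fun x => F (u x t) + (|c|/4) * (u x t) ^ 2) :=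
    (hint3 t ht).add ((hint1 t ht).const_mul (|c|/4))
  have hindint : Integrable (Set.indicator B (fun _ => K)) := by
    apply (integrable_indicator_iff Metric.isOpen_ball.measurableSet).2
    exact integrableOn_const measure_ball_lt_top.ne
  have hmono : ∫ x, (F (u x t) + (|c|/4) * (u x t) ^ 2) ≤
      ∫ x, Set.indicator B (fun _ => K) x :=
    integral_mono hgint hindint hptwise
  have hind : ∫ x, Set.indicator B (fun _ => K) x = (volume B).toReal * K := by
    rw [integral_indicator_const _ Metric.isOpen_ball.measurableSet]
    simp [smul_eq_mul]
    exact Or.inl rfl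
  have hsplit : ∫ x, (F (u x t) + (|c|/4) * (u x t) ^ 2) =
      (∫ x, F (u x t)) + (|c|/4) * ∫ x, (u x t) ^ 2 := by
    rw [integral_add (hint3 t ht) ((hint1 t ht).const_mul (|c|/4)),
      MeasureTheory.integral_const_mul]
  have hE := henergy t ht
  rw [hsplit, hind] at hmono
  linarith
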